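/- Define d : ℕ → ℕ by d(0) = 1 and, for p ≥ 1, d(p) = Σ_{a,b,c ≥ 0, a+b+c = p−1} d(a)·d(b)·d(c) + Σ_{a,b ≥ 1, a+b = p} d(a)·d(b). Then for every p ≥ 1, p · d(p) = Σ_{i=0}^{p−1} binom(3p, i) · binom(2p−i−2, p−i−1). (This sequence d(p) is the sequence of dimensions of the homogeneous components of the quadri-algebra operad of Aguiar and Loday, and the identity establishes their Conjecture 4.2.) -/

import Mathlib

open PowerSeries Finset

namespace QuadriAux

noncomputable section

/-- Substitution of `E` (with zero constant term) into `H`, coefficientwise. -/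
def ev (E H : PowerSeries ℚ) : PowerSeries ℚ :=
  PowerSeries.mk fun n => ∑ m ∈ Finset.range (n + 1),
    (PowerSeries.coeff m H) * PowerSeries.coeff n (E ^ m)

variable {E : PowerSeries ℚ}

lemma coeff_pow_eq_zero (hE : PowerSeries.constantCoeff E = 0) {m n : ℕ} (h : n < m) :
    PowerSeries.coeff n (E ^ m) = 0 := by
  have hX : (PowerSeries.X : PowerSeries ℚ) ∣ E := by
    rw [PowerSeries.X_dvd_iff]; exact hE
  have : (PowerSeries.X : PowerSeries ℚ) ^ m ∣ E ^ m := pow_dvd_pow_of_dvd hX m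
  exact (PowerSeries.X_pow_dvd_iff.mp this) n h

lemma coeff_ev (hE : PowerSeries.constantCoeff E = 0) (H : PowerSeries ℚ) {n N : ℕ} (h : n < N) :
    PowerSeries.coeff n (ev E H) =
      ∑ m ∈ Finset.range N, (PowerSeries.coeff m H) * PowerSeries.coeff n (E ^ m) := by
  rw [ev, PowerSeries.coeff_mk]
  apply Finset.sum_subset
  · intro x hx
    simp only [Finset.mem_range] at hx ⊢; omega
  · intro x _ hx
    simp only [Finset.mem_range, not_lt] at hx
    rw [coeff_pow_eq_zero hE (by omega), mul_zero]

lemma ev_one : ev (E := E) 1 = 1 := by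
  ext n
  rw [ev, PowerSeries.coeff_mk]
  rw [Finset.sum_eq_single 0]
  · simp
  · intro b _ hb
    rw [PowerSeries.coeff_one, if_neg hb, zero_mul]
  · simp

lemma ev_X (hE : PowerSeries.constantCoeff E = 0) : ev E PowerSeries.X = E := by
  ext n
  rw [ev, PowerSeries.coeff_mk]
  rcases Nat.eq_zero_or_pos n with rfl | hn
  · simp [PowerSeries.coeff_zero_eq_constantCoeff, hE]
  · rw [Finset.sum_eq_single 1]
    · simp
    · intro b _ hb
      rw [PowerSeries.coeff_X, if_neg hb, zero_mul]
    · intro h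
      exact absurd (Finset.mem_range.mpr (by omega)) h

lemma ev_mul (hE : PowerSeries.constantCoeff E = 0) (H K : PowerSeries ℚ) : ev E (H * K) = ev E H * ev E K := by
  ext n
  -- the common value is the sum over the full square
  have key : ∀ a b : ℕ, PowerSeries.coeff n (E ^ (a + b)) =
      ∑ x ∈ Finset.HasAntidiagonal.antidiagonal n,
        PowerSeries.coeff x.1 (E ^ a) * PowerSeries.coeff x.2 (E ^ b) := by
    intro a b
    rw [pow_add, PowerSeries.coeff_mul]
  have lhs : PowerSeries.coeff n (ev E (H * K)) =
      ∑ m ∈ Finset.range (n + 1), ∑ a ∈ Finset.range (m + 1),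
        (PowerSeries.coeff a H * PowerSeries.coeff (m - a) K) *
          PowerSeries.coeff n (E ^ m) := by
    rw [ev, PowerSeries.coeff_mk]
    refine Finset.sum_congr rfl fun m _ => ?_
    rw [PowerSeries.coeff_mul, Finset.Nat.sum_antidiagonal_eq_sum_range_succ_mk,
      Finset.sum_mul]
  have rhs : PowerSeries.coeff n (ev E H * ev E K) =
      ∑ a ∈ Finset.range (n + 1), ∑ b ∈ Finset.range (n + 1),
        (PowerSeries.coeff a H * PowerSeries.coeff b K) *
          PowerSeries.coeff n (E ^ (a + b)) := by
    rw [PowerSeries.coeff_mul]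
    have : ∀ x ∈ Finset.HasAntidiagonal.antidiagonal n,
        PowerSeries.coeff x.1 (ev E H) * PowerSeries.coeff x.2 (ev E K) =
        ∑ a ∈ Finset.range (n + 1), ∑ b ∈ Finset.range (n + 1),
          (PowerSeries.coeff a H * PowerSeries.coeff b K) *
            (PowerSeries.coeff x.1 (E ^ a) * PowerSeries.coeff x.2 (E ^ b)) := by
      intro x hx
      rw [Finset.HasAntidiagonal.mem_antidiagonal] at hx
      rw [coeff_ev hE H (show x.1 < n + 1 by omega),
        coeff_ev hE K (show x.2 < n + 1 by omega), Finset.sum_mul_sum]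
      refine Finset.sum_congr rfl fun a _ => Finset.sum_congr rfl fun b _ => by ring
    rw [Finset.sum_congr rfl this]
    rw [Finset.sum_comm]
    refine Finset.sum_congr rfl fun a _ => ?_
    rw [Finset.sum_comm]
    refine Finset.sum_congr rfl fun b _ => ?_
    rw [key, Finset.mul_sum]
  rw [lhs, rhs]
  -- now both are sums of g a b := coeff a H * coeff b K * coeff n (E ^ (a+b))
  -- LHS is the triangle sum, RHS the square sum; they differ by vanishing terms.
  have tri : (∑ m ∈ Finset.range (n + 1), ∑ a ∈ Finset.range (m + 1),
        (PowerSeries.coeff a H * PowerSeries.coeff (m - a) K) *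
          PowerSeries.coeff n (E ^ m))
      = ∑ a ∈ Finset.range (n + 1), ∑ b ∈ Finset.range (n + 1 - a),
        (PowerSeries.coeff a H * PowerSeries.coeff b K) *
          PowerSeries.coeff n (E ^ (a + b)) := by
    rw [Finset.sum_sigma', Finset.sum_sigma']
    apply Finset.sum_nbij' (fun x => ⟨x.2, x.1 - x.2⟩) (fun x => ⟨x.1 + x.2, x.1⟩)
    · intro x hx
      simp only [Finset.mem_sigma, Finset.mem_range] at hx ⊢; omega
    · intro x hx
      simp only [Finset.mem_sigma, Finset.mem_range] at hx ⊢; omega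
    · intro x hx
      simp only [Finset.mem_sigma, Finset.mem_range] at hx
      ext <;> simp <;> omega
    · intro x hx
      simp only [Finset.mem_sigma, Finset.mem_range] at hx
      ext <;> simp <;> omega
    · intro x hx
      simp only [Finset.mem_sigma, Finset.mem_range] at hx
      have : x.2 + (x.1 - x.2) = x.1 := by omega
      rw [this]
  rw [tri]
  refine Finset.sum_congr rfl fun a ha => ?_
  apply Finset.sum_subset
  · intro x hx
    simp only [Finset.mem_range] at hx ⊢; omega
  · intro b hb hb'
    simp only [Finset.mem_range, not_lt] at hb hb'
    rw [coeff_pow_eq_zero hE (show n < a + b by omega), mul_zero]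

lemma ev_pow (hE : PowerSeries.constantCoeff E = 0) (H : PowerSeries ℚ) (k : ℕ) : ev E (H ^ k) = (ev E H) ^ k := by
  induction k with
  | zero => simpa using ev_one (E := E)
  | succ k ih => rw [pow_succ, pow_succ, ev_mul hE, ih]

lemma ev_add (H K : PowerSeries ℚ) : ev E (H + K) = ev E H + ev E K := by
  ext n
  simp only [ev, PowerSeries.coeff_mk, map_add, add_mul, Finset.sum_add_distrib]

lemma ev_sub (H K : PowerSeries ℚ) : ev E (H - K) = ev E H - ev E K := by
  ext n
  simp only [ev, PowerSeries.coeff_mk, map_sub, sub_mul, Finset.sum_sub_distrib]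


/-- The series `φ = (1+X)^3/(1-X)`. -/
def phiq : PowerSeries ℚ := (1 + PowerSeries.X) ^ 3 * PowerSeries.mk 1

/-- The series `E = ∑_{p ≥ 1} d p X^p`. -/
def Ed (d : ℕ → ℕ) : PowerSeries ℚ :=
  PowerSeries.mk fun n => if n = 0 then 0 else (d n : ℚ)

/-- The series `D = ∑_{p ≥ 0} d p X^p`. -/
def Dd (d : ℕ → ℕ) : PowerSeries ℚ := PowerSeries.mk fun n => (d n : ℚ)

lemma constantCoeff_Ed (d : ℕ → ℕ) : PowerSeries.constantCoeff (Ed d) = 0 := by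
  simp [Ed, PowerSeries.constantCoeff_mk]

lemma coeff_Ed (d : ℕ → ℕ) {p : ℕ} (hp : 1 ≤ p) :
    PowerSeries.coeff p (Ed d) = (d p : ℚ) := by
  rw [Ed, PowerSeries.coeff_mk, if_neg (by omega)]

lemma one_add_Ed (d : ℕ → ℕ) (h0 : d 0 = 1) : 1 + Ed d = Dd d := by
  ext n
  rcases Nat.eq_zero_or_pos n with rfl | hn
  · simp [Ed, Dd, PowerSeries.coeff_zero_eq_constantCoeff, PowerSeries.constantCoeff_mk, h0]
  · rw [map_add, PowerSeries.coeff_one, if_neg (by omega), Ed, Dd,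
      PowerSeries.coeff_mk, PowerSeries.coeff_mk, if_neg (by omega), zero_add]

section

variable (d : ℕ → ℕ) (h0 : d 0 = 1)
  (hrec : ∀ p : ℕ, 1 ≤ p → d p =
      (∑ a ∈ Finset.range p, ∑ b ∈ Finset.range (p - a),
        d a * d b * d (p - 1 - a - b)) +
      ∑ a ∈ Finset.Icc 1 (p - 1), d a * d (p - a))

include h0 hrec

lemma feq : Ed d = PowerSeries.X * (Dd d) ^ 3 + (Ed d) ^ 2 := by
  ext p
  rw [map_add]
  rcases Nat.eq_zero_or_pos p with rfl | hp
  · simp only [PowerSeries.coeff_zero_eq_constantCoeff, map_mul, map_pow, constantCoeff_Ed,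
      PowerSeries.constantCoeff_X]
    ring
  · have h1 : PowerSeries.coeff p (PowerSeries.X * (Dd d) ^ 3) =
        PowerSeries.coeff (p - 1) ((Dd d) ^ 3) := by
      conv_lhs => rw [show p = (p - 1) + 1 by omega]
      rw [PowerSeries.coeff_succ_X_mul]
    have h2 : PowerSeries.coeff (p - 1) ((Dd d) ^ 3) =
        ∑ a ∈ Finset.range p, ∑ b ∈ Finset.range (p - a),
          ((d a : ℚ) * d b * d (p - 1 - a - b)) := by
      have h3 : (Dd d) ^ 3 = Dd d * (Dd d * Dd d) := by ring
      rw [h3, PowerSeries.coeff_mul, Finset.Nat.sum_antidiagonal_eq_sum_range_succ_mk,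
        show (p - 1).succ = p by omega]
      refine Finset.sum_congr rfl fun a ha => ?_
      rw [Finset.mem_range] at ha
      rw [PowerSeries.coeff_mul, Finset.Nat.sum_antidiagonal_eq_sum_range_succ_mk,
        show (p - 1 - a).succ = p - a by omega, Finset.mul_sum]
      refine Finset.sum_congr rfl fun b hb => ?_
      rw [Dd, PowerSeries.coeff_mk, PowerSeries.coeff_mk, PowerSeries.coeff_mk]
      ring
    have h3 : PowerSeries.coeff p ((Ed d) ^ 2) =
        ∑ a ∈ Finset.Icc 1 (p - 1), ((d a : ℚ) * d (p - a)) := by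
      have hsq : (Ed d) ^ 2 = Ed d * Ed d := by ring
      rw [hsq, PowerSeries.coeff_mul, Finset.Nat.sum_antidiagonal_eq_sum_range_succ_mk]
      have hsub : Finset.Icc 1 (p - 1) ⊆ Finset.range p.succ := by
        intro x hx
        rw [Finset.mem_Icc] at hx
        rw [Finset.mem_range]; omega
      have hvan : ∀ x ∈ Finset.range p.succ, x ∉ Finset.Icc 1 (p - 1) →
          PowerSeries.coeff x (Ed d) * PowerSeries.coeff (p - x) (Ed d) = 0 := by
        intro x hx hx'
        rw [Finset.mem_range] at hx
        rw [Finset.mem_Icc] at hx'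
        have : x = 0 ∨ x = p := by omega
        rcases this with rfl | rfl
        · simp [Ed]
        · simp [Ed, Nat.sub_self]
      rw [← Finset.sum_subset hsub hvan]
      refine Finset.sum_congr rfl fun a ha => ?_
      rw [Finset.mem_Icc] at ha
      rw [coeff_Ed d (by omega), coeff_Ed d (by omega)]
    rw [h1, h2, h3, coeff_Ed d hp, hrec p hp]
    push_cast
    ring

lemma funeq : Ed d * (1 - Ed d) = PowerSeries.X * (1 + Ed d) ^ 3 := by
  rw [one_add_Ed d h0]
  linear_combination feq d h0 hrec

lemma inv_oneSubEd : (1 - Ed d) * ev (Ed d) (PowerSeries.mk 1) = 1 := by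
  have h := ev_mul (E := Ed d) (constantCoeff_Ed d) (PowerSeries.mk 1) (1 - PowerSeries.X)
  rw [mk_one_mul_one_sub_eq_one, ev_one, ev_sub, ev_one, ev_X (constantCoeff_Ed d)] at h
  linear_combination -h

lemma hfe : Ed d = PowerSeries.X *
    ((1 + Ed d) ^ 3 * ev (Ed d) (PowerSeries.mk 1)) := by
  linear_combination ev (Ed d) (PowerSeries.mk 1) * funeq d h0 hrec
    - Ed d * inv_oneSubEd d h0 hrec

end

end

section MainInduction

variable {E : PowerSeries ℚ}

lemma lemA (hE : PowerSeries.constantCoeff E = 0)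
    (hfeE : E = PowerSeries.X * ((1 + E) ^ 3 * ev E (PowerSeries.mk 1))) (k n : ℕ) :
    PowerSeries.coeff (k + n) (E ^ k) =
      ∑ m ∈ Finset.range (n + 1),
        PowerSeries.coeff m (phiq ^ k) * PowerSeries.coeff n (E ^ m) := by
  have hG : ((1 + E) ^ 3 * ev E (PowerSeries.mk 1)) ^ k = ev E (phiq ^ k) := by
    rw [ev_pow hE, phiq, ev_mul hE, ev_pow hE, ev_add, ev_one, ev_X hE]
  have hEk : E ^ k = PowerSeries.X ^ k * ((1 + E) ^ 3 * ev E (PowerSeries.mk 1)) ^ k := by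
    conv_lhs => rw [hfeE]
    rw [mul_pow]
  rw [hEk, show k + n = n + k by omega, PowerSeries.coeff_X_pow_mul, hG, ev,
    PowerSeries.coeff_mk]

lemma constantCoeff_phiq_pow (k : ℕ) :
    PowerSeries.constantCoeff (phiq ^ k) = 1 := by
  rw [map_pow, phiq, map_mul, map_pow, map_add, map_one, PowerSeries.constantCoeff_X,
    PowerSeries.constantCoeff_mk]
  norm_num

lemma main_induction (hE : PowerSeries.constantCoeff E = 0)
    (hfeE : E = PowerSeries.X * ((1 + E) ^ 3 * ev E (PowerSeries.mk 1))) :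
    ∀ p k n : ℕ, p = k + n → 1 ≤ k →
      (p : ℚ) * PowerSeries.coeff p (E ^ k) =
        (k : ℚ) * PowerSeries.coeff n (phiq ^ p) := by
  intro p
  induction p using Nat.strong_induction_on with
  | _ p IH =>
  rintro k n rfl hk
  rcases Nat.eq_zero_or_pos n with rfl | hn
  · have h1 : PowerSeries.constantCoeff (ev E (PowerSeries.mk 1)) = 1 := by
      rw [← PowerSeries.coeff_zero_eq_constantCoeff, ev, PowerSeries.coeff_mk]
      simp
    have hconstG : PowerSeries.constantCoeff ((1 + E) ^ 3 * ev E (PowerSeries.mk 1)) = 1 := by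
      rw [map_mul, map_pow, map_add, map_one, hE, add_zero, one_pow, one_mul, h1]
    have hcoeff : PowerSeries.coeff (k + 0) (E ^ k) = 1 := by
      conv_lhs => rw [hfeE]
      rw [mul_pow, show k + 0 = 0 + k by omega, PowerSeries.coeff_X_pow_mul,
        PowerSeries.coeff_zero_eq_constantCoeff, map_pow, hconstG, one_pow]
    have hphi : PowerSeries.coeff 0 (phiq ^ (k + 0)) = 1 := by
      rw [PowerSeries.coeff_zero_eq_constantCoeff, constantCoeff_phiq_pow]
    rw [hcoeff, hphi]
    ring
  · have hA := lemA hE hfeE k n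
    have step : ∀ m ∈ Finset.range (n + 1),
        (n : ℚ) * PowerSeries.coeff n (E ^ m) =
          (m : ℚ) * PowerSeries.coeff (n - m) (phiq ^ n) := by
      intro m hm
      rw [Finset.mem_range] at hm
      rcases Nat.eq_zero_or_pos m with rfl | hm1
      · rw [pow_zero, PowerSeries.coeff_one, if_neg (by omega)]
        simp
      · exact IH n (by omega) m (n - m) (by omega) hm1
    have key1 : (n : ℚ) * PowerSeries.coeff (k + n) (E ^ k)
        = ∑ m ∈ Finset.range (n + 1), PowerSeries.coeff m (phiq ^ k) *
            ((m : ℚ) * PowerSeries.coeff (n - m) (phiq ^ n)) := by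
      rw [hA, Finset.mul_sum]
      refine Finset.sum_congr rfl fun m hm => ?_
      rw [← step m hm]
      ring
    have key2 : ∑ m ∈ Finset.range (n + 1), PowerSeries.coeff m (phiq ^ k) *
            ((m : ℚ) * PowerSeries.coeff (n - m) (phiq ^ n))
        = PowerSeries.coeff (n - 1)
            ((PowerSeries.derivative (R := ℚ) (phiq ^ k)) * phiq ^ n) := by
      rw [PowerSeries.coeff_mul, Finset.Nat.sum_antidiagonal_eq_sum_range_succ_mk,
        show (n - 1).succ = n by omega, Finset.sum_range_succ']
      simp only [Nat.cast_zero, zero_mul, mul_zero, add_zero]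
      refine Finset.sum_congr rfl fun i hi => ?_
      rw [Finset.mem_range] at hi
      rw [PowerSeries.coeff_derivative, show n - 1 - i = n - (i + 1) by omega]
      push_cast
      ring
    have key3 : ((k : ℚ) + n) • ((PowerSeries.derivative (R := ℚ) (phiq ^ k)) * phiq ^ n)
        = (k : ℚ) • (PowerSeries.derivative (R := ℚ) (phiq ^ (k + n))) := by
      obtain ⟨k', rfl⟩ : ∃ k', k = k' + 1 := ⟨k - 1, by omega⟩
      rw [Derivation.leibniz_pow, Derivation.leibniz_pow]
      have hns : (k' + 1 + n) - 1 = k' + n := by omega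
      simp only [nsmul_eq_mul, smul_eq_mul, Nat.add_sub_cancel, hns,
        Algebra.smul_def, map_add, map_natCast, map_one]
      push_cast
      ring
    have key4 : PowerSeries.coeff (n - 1)
          (PowerSeries.derivative (R := ℚ) (phiq ^ (k + n)))
        = (n : ℚ) * PowerSeries.coeff n (phiq ^ (k + n)) := by
      rw [PowerSeries.coeff_derivative, show n - 1 + 1 = n by omega]
      have : ((n - 1 : ℕ) : ℚ) + 1 = (n : ℚ) := by
        rw [Nat.cast_sub (by omega)]
        ring
      rw [this]
      ring
    have hn0 : (n : ℚ) ≠ 0 := by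
      exact_mod_cast Nat.pos_iff_ne_zero.mp hn
    apply mul_left_cancel₀ hn0
    have key3' := congrArg (PowerSeries.coeff (n - 1)) key3
    rw [map_smul, map_smul, smul_eq_mul, smul_eq_mul] at key3'
    calc (n : ℚ) * ((↑(k + n) : ℚ) * PowerSeries.coeff (k + n) (E ^ k))
        = (↑(k + n) : ℚ) * ((n : ℚ) * PowerSeries.coeff (k + n) (E ^ k)) := by ring
      _ = (↑(k + n) : ℚ) * PowerSeries.coeff (n - 1)
            ((PowerSeries.derivative (R := ℚ) (phiq ^ k)) * phiq ^ n) := by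
          rw [key1, key2]
      _ = (k : ℚ) * PowerSeries.coeff (n - 1)
            (PowerSeries.derivative (R := ℚ) (phiq ^ (k + n))) := by
          push_cast at key3' ⊢
          linarith [key3']
      _ = (k : ℚ) * ((n : ℚ) * PowerSeries.coeff n (phiq ^ (k + n))) := by rw [key4]
      _ = (n : ℚ) * ((k : ℚ) * PowerSeries.coeff n (phiq ^ (k + n))) := by ring

end MainInduction

lemma coeff_one_add_X_pow_PS (N i : ℕ) :
    PowerSeries.coeff i ((1 + PowerSeries.X) ^ N) = (Nat.choose N i : ℚ) := by
  have h : ((1 : PowerSeries ℚ) + PowerSeries.X) ^ N =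
      ((((1 : Polynomial ℚ) + Polynomial.X) ^ N : Polynomial ℚ) : PowerSeries ℚ) := by
    rw [Polynomial.coe_pow, Polynomial.coe_add, Polynomial.coe_one, Polynomial.coe_X]
  rw [h, Polynomial.coeff_coe, Polynomial.coeff_one_add_X_pow]

lemma coeff_phiq_pow {p : ℕ} (hp : 1 ≤ p) :
    PowerSeries.coeff (p - 1) (phiq ^ p) =
      ∑ i ∈ Finset.range p,
        (Nat.choose (3 * p) i : ℚ) * Nat.choose (2 * p - 2 - i) (p - 1) := by
  have e1 : phiq ^ p = (1 + PowerSeries.X) ^ (3 * p) *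
      (PowerSeries.mk 1 : PowerSeries ℚ) ^ p := by
    rw [phiq, mul_pow, ← pow_mul]
  have e2 : (PowerSeries.mk 1 : PowerSeries ℚ) ^ p =
      PowerSeries.mk fun n => (Nat.choose (p - 1 + n) (p - 1) : ℚ) := by
    conv_lhs => rw [show p = (p - 1) + 1 by omega]
    exact mk_one_pow_eq_mk_choose_add ℚ (p - 1)
  rw [e1, e2, PowerSeries.coeff_mul, Finset.Nat.sum_antidiagonal_eq_sum_range_succ_mk,
    show (p - 1).succ = p by omega]
  refine Finset.sum_congr rfl fun i hi => ?_
  rw [Finset.mem_range] at hi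
  rw [coeff_one_add_X_pow_PS, PowerSeries.coeff_mk,
    show p - 1 + (p - 1 - i) = 2 * p - 2 - i by omega]


end QuadriAux

theorem quadri_dimension_formula (d : ℕ → ℕ) (h0 : d 0 = 1)
    (hrec : ∀ p : ℕ, 1 ≤ p → d p =
      (∑ a ∈ Finset.range p, ∑ b ∈ Finset.range (p - a),
        d a * d b * d (p - 1 - a - b)) +
      ∑ a ∈ Finset.Icc 1 (p - 1), d a * d (p - a)) :
    ∀ p : ℕ, 1 ≤ p → p * d p =
      ∑ i ∈ Finset.range p,
        Nat.choose (3 * p) i * Nat.choose (2 * p - i - 2) (p - i - 1) := by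
  intro p hp
  have hQ := QuadriAux.main_induction (QuadriAux.constantCoeff_Ed d)
    (QuadriAux.hfe d h0 hrec) p 1 (p - 1) (by omega) le_rfl
  rw [pow_one, QuadriAux.coeff_Ed d hp, QuadriAux.coeff_phiq_pow hp] at hQ
  have hgoal : ∑ i ∈ Finset.range p,
      Nat.choose (3 * p) i * Nat.choose (2 * p - i - 2) (p - i - 1)
      = ∑ i ∈ Finset.range p,
        Nat.choose (3 * p) i * Nat.choose (2 * p - 2 - i) (p - 1) := by
    refine Finset.sum_congr rfl fun i hi => ?_
    rw [Finset.mem_range] at hi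
    rw [show 2 * p - i - 2 = 2 * p - 2 - i by omega,
      show p - i - 1 = (2 * p - 2 - i) - (p - 1) by omega,
      Nat.choose_symm (by omega)]
  rw [hgoal]
  have : ((p * d p : ℕ) : ℚ) = ((∑ i ∈ Finset.range p,
      Nat.choose (3 * p) i * Nat.choose (2 * p - 2 - i) (p - 1) : ℕ) : ℚ) := by
    push_cast
    rw [hQ]
    ring
  exact_mod_cast this
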